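/- Let P₁,…,Pₙ be independent valid p-values and let g : [0,1]^{n−r+1} → [0,1] be a symmetric, nondecreasing function such that g(Q₁,…,Q_{n−r+1}) is a valid p-value whenever Q₁,…,Q_{n−r+1} are independent valid p-values. Then P_{r/n} := g(P_{(r)}, P_{(r+1)}, …, P_{(n)}), the function of the n−r+1 largest order statistics, is a valid p-value for the partial conjunction null H₀^{r/n}: for every θ with at most r−1 non-null components, Pr_θ(P_{r/n} ≤ α) ≤ α for all α. -/

import Mathlib

open MeasureTheory ProbabilityTheory
open scoped Classical


lemma order_stat_key {n N : ℕ} (hNn : N ≤ n) (p : Fin n → ℝ) (e : Fin N → Fin n)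
    (he : Function.Injective e) (j : Fin N) (m : Fin n) (hmj : (n - N) + (j:ℕ) ≤ (m:ℕ)) :
    (p ∘ e) (Tuple.sort (p ∘ e) j) ≤ p (Tuple.sort p m) := by
  set v := p (Tuple.sort p m) with hv
  set C : Finset (Fin N) := Finset.univ.filter (fun k => p (e k) ≤ v) with hC
  have hCcard : (j:ℕ) + 1 ≤ C.card := by
    set A : Finset (Fin n) := (Finset.Iic m).image (Tuple.sort p) with hA
    have hAcard : A.card = (m:ℕ) + 1 := by
      rw [hA, Finset.card_image_of_injective _ (Tuple.sort p).injective, Fin.card_Iic]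
    have hAle : ∀ i ∈ A, p i ≤ v := by
      intro i hi
      rw [hA, Finset.mem_image] at hi
      obtain ⟨m', hm', rfl⟩ := hi
      exact Tuple.monotone_sort p (Finset.mem_Iic.mp hm')
    set E : Finset (Fin n) := Finset.univ.image e with hE
    have hEcard : E.card = N := by
      rw [hE, Finset.card_image_of_injective _ he, Finset.card_univ, Fintype.card_fin]
    have hsdiff : (A \ E).card ≤ n - N := by
      have h1 : A \ E ⊆ Finset.univ \ E := Finset.sdiff_subset_sdiff (Finset.subset_univ A) le_rfl
      have h2 := Finset.card_le_card h1
      rwa [Finset.card_sdiff_of_subset (Finset.subset_univ E), Finset.card_univ, Fintype.card_fin,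
        hEcard] at h2
    have hinter : (j:ℕ) + 1 ≤ (A ∩ E).card := by
      have := Finset.card_inter_add_card_sdiff A E
      omega
    have hsub : A ∩ E ⊆ C.image e := by
      intro i hi
      rw [Finset.mem_inter] at hi
      obtain ⟨k, _, rfl⟩ := Finset.mem_image.mp hi.2
      exact Finset.mem_image_of_mem e (by simp [hC, hAle _ hi.1])
    calc (j:ℕ) + 1 ≤ (A ∩ E).card := hinter
      _ ≤ (C.image e).card := Finset.card_le_card hsub
      _ = C.card := Finset.card_image_of_injective _ he
  set τ := Tuple.sort (p ∘ e) with hτ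
  set C' : Finset (Fin N) := Finset.univ.filter (fun k => (p ∘ e) (τ k) ≤ v) with hC'
  have hCC' : C'.image τ = C := by
    ext k
    simp only [hC', hC, Finset.mem_image, Finset.mem_filter, Finset.mem_univ, true_and]
    constructor
    · rintro ⟨a, ha, rfl⟩; exact ha
    · intro hk; exact ⟨τ.symm k, by simpa using hk, by simp⟩
  have hC'card : (j:ℕ) + 1 ≤ C'.card := by
    have h := Finset.card_image_of_injective C' τ.injective
    rw [hCC'] at h
    omega
  by_contra hcon
  push_neg at hcon
  have hjC' : j ∉ C' := by
    simp only [hC', Finset.mem_filter, Finset.mem_univ, true_and, not_le]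
    exact hcon
  have hsub : C' ⊆ Finset.Iio j := by
    intro k hk
    rw [Finset.mem_Iio]
    by_contra hlt
    push_neg at hlt
    exact hjC' (by
      simp only [hC', Finset.mem_filter, Finset.mem_univ, true_and] at hk ⊢
      exact le_trans (Tuple.monotone_sort (p ∘ e) hlt) hk)
  have := Finset.card_le_card hsub
  rw [Fin.card_Iio] at this
  omega


theorem benjamini_heller_partial_conjunction
    {Ω Θ' : Type*} [MeasurableSpace Ω] (n r : ℕ) (hr1 : 1 ≤ r) (hrn : r ≤ n)
    (Pr : (Fin n → Θ') → Measure Ω) (hprob : ∀ θ, IsProbabilityMeasure (Pr θ))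
    (Θ0 : Fin n → Set Θ') (P : Fin n → Ω → ℝ)
    (hPmeas : ∀ i, Measurable (P i))
    (hPrange : ∀ i ω, P i ω ∈ Set.Icc (0:ℝ) 1)
    (hindep : ∀ θ, iIndepFun P (Pr θ))
    (hvalid : ∀ θ : Fin n → Θ', ∀ i, θ i ∈ Θ0 i →
      ∀ α ∈ Set.Icc (0:ℝ) 1, Pr θ {ω | P i ω ≤ α} ≤ ENNReal.ofReal α)
    (g : (Fin (n - r + 1) → ℝ) → ℝ)
    (hg_mono : Monotone g)
    (hg_sym : ∀ (σ : Equiv.Perm (Fin (n - r + 1))) (q : Fin (n - r + 1) → ℝ),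
      g (q ∘ σ) = g q)
    (hg_valid : ∀ (ν : Measure Ω), IsProbabilityMeasure ν →
      ∀ Q : Fin (n - r + 1) → Ω → ℝ, (∀ i, Measurable (Q i)) →
        iIndepFun Q ν →
        (∀ i, ∀ α ∈ Set.Icc (0:ℝ) 1, ν {ω | Q i ω ≤ α} ≤ ENNReal.ofReal α) →
        ∀ α ∈ Set.Icc (0:ℝ) 1,
          ν {ω | g (fun i => Q i ω) ≤ α} ≤ ENNReal.ofReal α) :
    ∀ θ : Fin n → Θ',
      (Finset.univ.filter (fun i => θ i ∉ Θ0 i)).card ≤ r - 1 →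
      ∀ α ∈ Set.Icc (0:ℝ) 1,
        Pr θ {ω | g (fun j => (fun i => P i ω)
          (Tuple.sort (fun i => P i ω) ⟨r - 1 + j.1, by have := j.isLt; omega⟩)) ≤ α}
          ≤ ENNReal.ofReal α := by
  intro θ hθ α hα
  have hprobθ := hprob θ
  set S : Finset (Fin n) := Finset.univ.filter (fun i => θ i ∈ Θ0 i) with hS
  set F : Finset (Fin n) := Finset.univ.filter (fun i => θ i ∉ Θ0 i) with hF
  have hScard : n - r + 1 ≤ S.card := by
    have hsub : (Finset.univ : Finset (Fin n)) ⊆ S ∪ F := by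
      intro i _
      by_cases h : θ i ∈ Θ0 i
      · exact Finset.mem_union_left _ (Finset.mem_filter.mpr ⟨Finset.mem_univ i, h⟩)
      · exact Finset.mem_union_right _ (Finset.mem_filter.mpr ⟨Finset.mem_univ i, h⟩)
    have h1 : n ≤ (S ∪ F).card := by
      have := Finset.card_le_card hsub
      rwa [Finset.card_univ, Fintype.card_fin] at this
    have h2 := Finset.card_union_le S F
    have h3 : F.card ≤ r - 1 := hθ
    omega
  obtain ⟨t, hts, htcard⟩ := Finset.exists_subset_card_eq hScard
  set e := t.orderEmbOfFin htcard with he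
  have heinj : Function.Injective e := e.injective
  set Q : Fin (n - r + 1) → Ω → ℝ := fun k => P (e k) with hQ
  have hQmeas : ∀ k, Measurable (Q k) := fun k => hPmeas (e k)
  have hQvalid : ∀ k, ∀ β ∈ Set.Icc (0:ℝ) 1, Pr θ {ω | Q k ω ≤ β} ≤ ENNReal.ofReal β := by
    intro k β hβ
    have hmem : e k ∈ S := hts (t.orderEmbOfFin_mem htcard k)
    rw [hS, Finset.mem_filter] at hmem
    exact hvalid θ (e k) hmem.2 β hβ
  have hQindep : iIndepFun Q (Pr θ) := by
    rw [iIndepFun_iff_measure_inter_preimage_eq_mul]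
    intro Sf sets hsets
    set sets' : Fin n → Set ℝ := Function.extend e sets (fun _ => Set.univ) with hsets'
    have hext : ∀ k, sets' (e k) = sets k := fun k => heinj.extend_apply _ _ _
    have hmeas' : ∀ i ∈ Sf.map e.toEmbedding, MeasurableSet (sets' i) := by
      intro i hi
      rw [Finset.mem_map] at hi
      obtain ⟨k, hk, rfl⟩ := hi
      rw [show e.toEmbedding k = e k from rfl, hext]
      exact hsets k hk
    have hmain := (hindep θ).measure_inter_preimage_eq_mul (Sf.map e.toEmbedding) hmeas'
    have hL : (⋂ i ∈ Sf.map e.toEmbedding, P i ⁻¹' sets' i) = ⋂ k ∈ Sf, Q k ⁻¹' sets k := by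
      ext ω
      simp only [Set.mem_iInter, Finset.mem_map]
      constructor
      · intro h k hk
        have := h (e k) ⟨k, hk, rfl⟩
        rwa [hext] at this
      · rintro h i ⟨k, hk, rfl⟩
        rw [show e.toEmbedding k = e k from rfl, hext]
        exact h k hk
    have hR : (∏ i ∈ Sf.map e.toEmbedding, Pr θ (P i ⁻¹' sets' i))
        = ∏ k ∈ Sf, Pr θ (Q k ⁻¹' sets k) := by
      rw [Finset.prod_map]
      refine Finset.prod_congr rfl fun k _ => ?_
      rw [show e.toEmbedding k = e k from rfl, hext]
    rw [hL, hR] at hmain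
    exact hmain
  have hgQ := hg_valid (Pr θ) hprobθ Q hQmeas hQindep hQvalid α hα
  refine le_trans (measure_mono ?_) hgQ
  intro ω hω
  simp only [Set.mem_setOf_eq] at hω ⊢
  have hkey : ∀ j : Fin (n - r + 1),
      (((fun i => P i ω) ∘ e) ∘ Tuple.sort ((fun i => P i ω) ∘ e)) j
      ≤ (fun i => P i ω) (Tuple.sort (fun i => P i ω)
          ⟨r - 1 + j.1, by have := j.isLt; omega⟩) := by
    intro j
    refine order_stat_key (by omega) (fun i => P i ω) e heinj j _ ?_
    simp only []
    omega
  calc g (fun k => Q k ω)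
      = g ((fun k => Q k ω) ∘ Tuple.sort ((fun i => P i ω) ∘ e)) :=
        (hg_sym (Tuple.sort ((fun i => P i ω) ∘ e)) _).symm
    _ ≤ g (fun j => (fun i => P i ω) (Tuple.sort (fun i => P i ω)
          ⟨r - 1 + j.1, by have := j.isLt; omega⟩)) := hg_mono (fun j => hkey j)
    _ ≤ α := hω
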